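/- Let D ∈ ℕ, D ≥ 2, and let (φ_i)_{i∈Fin D} and (ψ_j)_{j∈Fin D} be two mutually unbiased orthonormal bases of ℂ^D, i.e. |⟨φ_i, ψ_j⟩|² = 1/D for all i, j. Set P_i := |φ_i⟩⟨φ_i|, Q_j := |ψ_j⟩⟨ψ_j|, K_i := √(√D/(2(√D+1))) · (P_i + D^{−1/2} I), and G_{i,j} := K_i Q_j K_i. Then (G_{i,j})_{(i,j)∈Fin D × Fin D} is a POVM on ℂ^D whose margins are Σ_{j} G_{i,j} = ½(1 + 1/√D) P_i + ½(1 − 1/√D) M_i and Σ_{i} G_{i,j} = ½(1 + 1/√D) Q_j + ½(1 − 1/√D) N_j, where M_i := (I − P_i)/(D−1) and N_j := (I − Q_j)/(D−1); i.e., G is an optimal approximate joint measurement of the MUB observables P and Q. -/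

import Mathlib

open Kronecker Matrix
open scoped ComplexOrder

noncomputable section

def IsPOVM {X : Type} [Fintype X] {m : Type} [Fintype m] [DecidableEq m]
    (M : X → Matrix m m ℂ) : Prop :=
  (∀ x, (M x).PosSemidef) ∧ ∑ x, M x = 1

def outer {d : Type} (u v : d → ℂ) : Matrix d d ℂ :=
  Matrix.vecMulVec u (star v)

lemma outer_mul_outer {d : Type} [Fintype d] (u v w x : d → ℂ) :
    outer u v * outer w x = (star v ⬝ᵥ w) • outer u x := by
  ext a b
  simp only [Matrix.mul_apply, outer, Matrix.vecMulVec_apply, Matrix.smul_apply,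
    dotProduct, Pi.star_apply, smul_eq_mul, Finset.sum_mul]
  exact Finset.sum_congr rfl fun k _ => by ring

lemma outer_conjTranspose {d : Type} (u : d → ℂ) : (outer u u)ᴴ = outer u u := by
  ext a b
  simp [outer, Matrix.conjTranspose_apply, Matrix.vecMulVec_apply, mul_comm]

lemma outer_posSemidef {d : Type} [Fintype d] [DecidableEq d] (u : d → ℂ) :
    (outer u u).PosSemidef := by
  rw [Matrix.posSemidef_iff_dotProduct_mulVec]
  constructor
  · exact outer_conjTranspose u
  · intro x
    have : star x ⬝ᵥ (outer u u *ᵥ x) = star (star u ⬝ᵥ x) * (star u ⬝ᵥ x) := by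
      simp only [dotProduct, Matrix.mulVec, outer, Matrix.vecMulVec_apply, dotProduct,
        Pi.star_apply, star_sum, star_mul', star_star, Finset.mul_sum, Finset.sum_mul]
      rw [Finset.sum_comm]
      exact Finset.sum_congr rfl fun k _ => Finset.sum_congr rfl fun l _ => by ring
    rw [this]
    exact star_mul_self_nonneg _

lemma sum_outer_eq_one {D : ℕ} (φ : Fin D → Fin D → ℂ)
    (hφ : ∀ i j, star (φ i) ⬝ᵥ φ j = if i = j then 1 else 0) :
    ∑ i, outer (φ i) (φ i) = 1 := by
  set A : Matrix (Fin D) (Fin D) ℂ := Matrix.of fun a i => φ i a with hA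
  have h1 : Aᴴ * A = 1 := by
    ext i j
    have := hφ i j
    simpa [Matrix.mul_apply, hA, Matrix.conjTranspose_apply, dotProduct,
      Matrix.one_apply] using this
  have h2 : A * Aᴴ = 1 := mul_eq_one_comm.mp h1
  ext a b
  have := congrFun (congrFun h2 a) b
  simpa [Matrix.mul_apply, hA, Matrix.conjTranspose_apply, outer,
    Matrix.vecMulVec_apply, Matrix.sum_apply] using this

theorem statement18 (D : ℕ) (hD : 2 ≤ D)
    (φ ψ : Fin D → (Fin D → ℂ))
    (hφ : ∀ i j, star (φ i) ⬝ᵥ φ j = if i = j then 1 else 0)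
    (hψ : ∀ i j, star (ψ i) ⬝ᵥ ψ j = if i = j then 1 else 0)
    (hmub : ∀ i j, ‖star (φ i) ⬝ᵥ ψ j‖ ^ 2 = 1 / D)
    (P Q : Fin D → Matrix (Fin D) (Fin D) ℂ)
    (hP : ∀ i, P i = outer (φ i) (φ i)) (hQ : ∀ j, Q j = outer (ψ j) (ψ j))
    (K : Fin D → Matrix (Fin D) (Fin D) ℂ)
    (hK : ∀ i, K i = Real.sqrt (Real.sqrt D / (2 * (Real.sqrt D + 1))) •
      (P i + ((Real.sqrt D)⁻¹ : ℝ) • (1 : Matrix (Fin D) (Fin D) ℂ)))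
    (G : Fin D → Fin D → Matrix (Fin D) (Fin D) ℂ)
    (hG : ∀ i j, G i j = K i * Q j * K i) :
    IsPOVM (fun p : Fin D × Fin D => G p.1 p.2) ∧
    (∀ i, ∑ j, G i j =
      ((1 / 2) * (1 + (Real.sqrt D)⁻¹) : ℝ) • P i +
      ((1 / 2) * (1 - (Real.sqrt D)⁻¹) : ℝ) •
        (((D : ℝ) - 1)⁻¹ • ((1 : Matrix (Fin D) (Fin D) ℂ) - P i))) ∧
    (∀ j, ∑ i, G i j =
      ((1 / 2) * (1 + (Real.sqrt D)⁻¹) : ℝ) • Q j +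
      ((1 / 2) * (1 - (Real.sqrt D)⁻¹) : ℝ) •
        (((D : ℝ) - 1)⁻¹ • ((1 : Matrix (Fin D) (Fin D) ℂ) - Q j))) := by
  -- real scalar facts
  -- real scalar facts
  set s : ℝ := Real.sqrt D with hs_def
  have hD2 : (2:ℝ) ≤ (D:ℝ) := by exact_mod_cast hD
  have hD0 : (0:ℝ) < D := by linarith
  have hss : s ^ 2 = D := Real.sq_sqrt hD0.le
  have hs0 : 0 < s := Real.sqrt_pos.mpr hD0
  have hs1 : 1 < s := by nlinarith
  set c : ℝ := Real.sqrt (s / (2 * (s + 1))) with hc_def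
  have hc2 : c ^ 2 = s / (2 * (s + 1)) := Real.sq_sqrt (by positivity)
  have hsne : s ≠ 0 := hs0.ne'
  have hs1ne : s + 1 ≠ 0 := by positivity
  have hsm1 : s - 1 ≠ 0 := by nlinarith
  have hDm1 : (D:ℝ) - 1 ≠ 0 := by nlinarith
  have hDne : (D:ℝ) ≠ 0 := hD0.ne'
  -- coefficient identities
  have hA : c^2 * (1 + 2 * s⁻¹) = (1/2)*(1+s⁻¹) - (1/2)*(1-s⁻¹) * ((D:ℝ)-1)⁻¹ := by
    rw [hc2, ← hss]
    have h21 : s^2 - 1 ≠ 0 := by nlinarith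
    field_simp
    ring
  have hB : c^2 * (s⁻¹ * s⁻¹) = (1/2)*(1-s⁻¹) * ((D:ℝ)-1)⁻¹ := by
    rw [hc2, ← hss]
    have h21 : s^2 - 1 ≠ 0 := by nlinarith
    field_simp
    ring
  have hDinv : (D:ℝ) * (s⁻¹ * s⁻¹) = 1 := by
    rw [← hss]; field_simp
  have hinv2 : (D:ℝ)⁻¹ = s⁻¹ * s⁻¹ := by
    rw [← hss, sq, mul_inv]
  -- matrix basics
  have hsumP : ∑ i, P i = 1 := by simp_rw [hP]; exact sum_outer_eq_one φ hφ
  have hsumQ : ∑ j, Q j = 1 := by simp_rw [hQ]; exact sum_outer_eq_one ψ hψ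
  have hPP : ∀ i, P i * P i = P i := by
    intro i; rw [hP, outer_mul_outer, hφ i i]; simp
  have hPQP : ∀ i j, P i * Q j * P i = ((D:ℝ)⁻¹ : ℝ) • P i := by
    intro i j
    rw [hP, hQ, outer_mul_outer, smul_mul_assoc, outer_mul_outer, smul_smul]
    have h1 : star (ψ j) ⬝ᵥ φ i = (starRingEnd ℂ) (star (φ i) ⬝ᵥ ψ j) := by
      simp [dotProduct, map_sum, mul_comm]
    rw [h1, Complex.mul_conj]
    have h2 : Complex.normSq (star (φ i) ⬝ᵥ ψ j) = (D:ℝ)⁻¹ := by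
      have h3 := hmub i j
      rw [Complex.sq_norm] at h3
      rw [h3, one_div]
    rw [h2, ← hP i, show ((((D:ℝ)⁻¹ : ℝ)) : ℂ) = algebraMap ℝ ℂ ((D:ℝ)⁻¹) from rfl,
      algebraMap_smul]
  have hX : ∀ i, (P i + (s⁻¹:ℝ) • (1 : Matrix (Fin D) (Fin D) ℂ)) *
      (P i + (s⁻¹:ℝ) • (1 : Matrix (Fin D) (Fin D) ℂ)) =
      (1 + 2*s⁻¹ : ℝ) • P i + (s⁻¹*s⁻¹ : ℝ) • (1 : Matrix (Fin D) (Fin D) ℂ) := by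
    intro i
    rw [add_mul, mul_add, mul_add, hPP i]
    simp only [mul_smul_comm, smul_mul_assoc, mul_one, one_mul, smul_smul]
    module
  have hKi2 : ∀ i, K i * K i = (c^2*(1+2*s⁻¹)) • P i +
      (c^2*(s⁻¹*s⁻¹)) • (1 : Matrix (Fin D) (Fin D) ℂ) := by
    intro i
    rw [hK i, smul_mul_smul_comm, hX i]
    module
  have hmargin1 : ∀ i, ∑ j, G i j = K i * K i := by
    intro i
    simp_rw [hG i]
    rw [← Finset.sum_mul, ← Finset.mul_sum, hsumQ, mul_one]
  have margin1 : ∀ i, ∑ j, G i j =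
      ((1 / 2) * (1 + s⁻¹) : ℝ) • P i +
      ((1 / 2) * (1 - s⁻¹) : ℝ) •
        (((D : ℝ) - 1)⁻¹ • ((1 : Matrix (Fin D) (Fin D) ℂ) - P i)) := by
    intro i
    rw [hmargin1 i, hKi2 i, hA, hB]
    module
  -- second margin
  have hGexp : ∀ i j, G i j = (c*c) • (P i * Q j * P i) + (c*c*s⁻¹) • (P i * Q j) +
      (c*c*s⁻¹) • (Q j * P i) + (c*c*(s⁻¹*s⁻¹)) • Q j := by
    intro i j
    rw [hG i j, hK i]
    simp only [smul_mul_assoc, mul_smul_comm, add_mul, mul_add, smul_add, smul_smul,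
      one_mul, mul_one]
    module
  have key2 : ∀ j, ∑ i, G i j = (c^2*(1+2*s⁻¹)) • Q j +
      (c^2*(s⁻¹*s⁻¹)) • (1 : Matrix (Fin D) (Fin D) ℂ) := by
    intro j
    have h1 : ∑ i, P i * Q j * P i = ((D:ℝ)⁻¹ : ℝ) • (1 : Matrix (Fin D) (Fin D) ℂ) := by
      simp_rw [hPQP _ j]
      rw [← Finset.smul_sum, hsumP]
    have h2 : ∑ i, P i * Q j = Q j := by rw [← Finset.sum_mul, hsumP, one_mul]
    have h3 : ∑ i, Q j * P i = Q j := by rw [← Finset.mul_sum, hsumP, mul_one]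
    calc ∑ i, G i j = ∑ i, ((c*c) • (P i * Q j * P i) + (c*c*s⁻¹) • (P i * Q j) +
        (c*c*s⁻¹) • (Q j * P i) + (c*c*(s⁻¹*s⁻¹)) • Q j) := by
          exact Finset.sum_congr rfl fun i _ => hGexp i j
    _ = (c*c) • (((D:ℝ)⁻¹ : ℝ) • (1 : Matrix (Fin D) (Fin D) ℂ)) + (c*c*s⁻¹) • Q j +
        (c*c*s⁻¹) • Q j + (D:ℝ) • ((c*c*(s⁻¹*s⁻¹)) • Q j) := by
          rw [Finset.sum_add_distrib, Finset.sum_add_distrib, Finset.sum_add_distrib,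
            ← Finset.smul_sum, ← Finset.smul_sum, ← Finset.smul_sum, h1, h2, h3,
            Finset.sum_const, Finset.card_univ, Fintype.card_fin,
            ← Nat.cast_smul_eq_nsmul ℝ]
    _ = (c^2*(1+2*s⁻¹)) • Q j + (c^2*(s⁻¹*s⁻¹)) • (1 : Matrix (Fin D) (Fin D) ℂ) := by
          rw [hinv2]
          match_scalars
          · ring
          · linear_combination (c^2) * hDinv
  have margin2 : ∀ j, ∑ i, G i j =
      ((1 / 2) * (1 + s⁻¹) : ℝ) • Q j +
      ((1 / 2) * (1 - s⁻¹) : ℝ) •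
        (((D : ℝ) - 1)⁻¹ • ((1 : Matrix (Fin D) (Fin D) ℂ) - Q j)) := by
    intro j
    rw [key2 j, hA, hB]
    module
  -- the POVM sum
  have hone : c^2*(1+2*s⁻¹) + (D:ℝ)*(c^2*(s⁻¹*s⁻¹)) = 1 := by
    rw [hc2, ← hss]
    field_simp
    ring
  have hsum : ∑ p : Fin D × Fin D, G p.1 p.2 = 1 := by
    rw [Fintype.sum_prod_type]
    calc ∑ i, ∑ j, G i j = ∑ i, ((c^2*(1+2*s⁻¹)) • P i +
        (c^2*(s⁻¹*s⁻¹)) • (1 : Matrix (Fin D) (Fin D) ℂ)) := by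
          exact Finset.sum_congr rfl fun i _ => (hmargin1 i).trans (hKi2 i)
    _ = (c^2*(1+2*s⁻¹)) • (∑ i, P i) + (D:ℝ) • ((c^2*(s⁻¹*s⁻¹)) •
        (1 : Matrix (Fin D) (Fin D) ℂ)) := by
          rw [Finset.sum_add_distrib, ← Finset.smul_sum, Finset.sum_const,
            Finset.card_univ, Fintype.card_fin, ← Nat.cast_smul_eq_nsmul ℝ]
    _ = 1 := by
          rw [hsumP, smul_smul, ← add_smul, hone, one_smul]
  -- Hermiticity of K and positivity
  have hKH : ∀ i, (K i)ᴴ = K i := by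
    intro i
    rw [hK i]
    simp [Matrix.conjTranspose_smul, Matrix.conjTranspose_add, hP, outer_conjTranspose]
  have hpsd : ∀ p : Fin D × Fin D, (G p.1 p.2).PosSemidef := by
    intro p
    have hQpsd : (Q p.2).PosSemidef := by rw [hQ]; exact outer_posSemidef _
    have : G p.1 p.2 = K p.1 * Q p.2 * (K p.1)ᴴ := by rw [hG, hKH]
    rw [this]
    exact hQpsd.mul_mul_conjTranspose_same _
  exact ⟨⟨hpsd, hsum⟩, margin1, margin2⟩
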